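/- arXiv:2201.00215 — 2 statements merged into one kernel-verified Lean document; each statement's English description precedes it below -/
import Mathlib

section
/- Let p ≥ 5 be prime, ℓ a positive integer, and r with 0 < r < p such that 24r+1 is a quadratic nonresidue mod p. Then every coefficient of q^{pn+r} (for n ≥ 0) in the formal power series (q;q)_∞ / (q^{pℓ};q^{pℓ})_∞ over ℤ is zero. -/
/-- `(q^m; q^m)_∞ = ∏_{i ≥ 1} (1 - q^{m i})` as a formal power series over ℤ,
defined coefficientwise via the (stabilizing) partial products: for `m ≥ 1`,
the coefficient of `q^n` in `∏_{i=1}^{N} (1 - q^{m i})` is independent of `N`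
once `N ≥ n`. -/
noncomputable def pochSelf (m : ℕ) : PowerSeries ℤ :=
  PowerSeries.mk fun n => PowerSeries.coeff (R := ℤ) n
    (∏ i ∈ Finset.range (n + 1), (1 - (PowerSeries.X : PowerSeries ℤ) ^ (m * (i + 1))))

open Finset

namespace PentAux

/-- Expansion of the partial product. -/
lemma coeff_prod (m N j : ℕ) :
    PowerSeries.coeff (R := ℤ) j (∏ i ∈ Finset.range N,
      (1 - (PowerSeries.X : PowerSeries ℤ) ^ (m * (i + 1)))) =
    ∑ t ∈ (Finset.range N).powerset,
      if m * (t.sum fun i => i + 1) = j then (-1 : ℤ) ^ t.card else 0 := by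
  have h1 : ∀ i : ℕ, (1 - (PowerSeries.X : PowerSeries ℤ) ^ (m * (i + 1))) =
      (-(PowerSeries.X : PowerSeries ℤ) ^ (m * (i + 1))) + 1 := by intro i; ring
  calc PowerSeries.coeff (R := ℤ) j (∏ i ∈ Finset.range N,
        (1 - (PowerSeries.X : PowerSeries ℤ) ^ (m * (i + 1))))
      = PowerSeries.coeff (R := ℤ) j (∑ t ∈ (Finset.range N).powerset,
          (∏ i ∈ t, (-(PowerSeries.X : PowerSeries ℤ) ^ (m * (i + 1)))) * ∏ i ∈ Finset.range N \ t, 1) := by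
        rw [← Finset.prod_add]; simp_rw [← h1]
    _ = ∑ t ∈ (Finset.range N).powerset,
          if m * (t.sum fun i => i + 1) = j then (-1 : ℤ) ^ t.card else 0 := by
        rw [map_sum]
        refine Finset.sum_congr rfl fun t ht => ?_
        rw [Finset.prod_const_one, mul_one]
        have : (∏ i ∈ t, (-(PowerSeries.X : PowerSeries ℤ) ^ (m * (i + 1)))) =
            (-1 : PowerSeries ℤ) ^ t.card * PowerSeries.X ^ (m * (t.sum fun i => i + 1)) := by
          rw [Finset.mul_sum]
          rw [← Finset.prod_pow_eq_pow_sum]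
          rw [← Finset.prod_const, ← Finset.prod_mul_distrib]
          refine Finset.prod_congr rfl fun i _ => by ring
        have h2 : ((-1 : PowerSeries ℤ)) ^ t.card = PowerSeries.C (R := ℤ) ((-1 : ℤ) ^ t.card) := by
          rw [map_pow, map_neg, map_one]
        rw [this, h2, PowerSeries.coeff_C_mul, PowerSeries.coeff_X_pow]
        by_cases h : m * (t.sum fun i => i + 1) = j
        · simp [h]
        · rw [if_neg h, if_neg (fun hh : j = _ => h hh.symm), mul_zero]
    
lemma constantCoeff_pochSelf (m : ℕ) (hm : 0 < m) :
    PowerSeries.constantCoeff (R := ℤ) (pochSelf m) = 1 := by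
  rw [← PowerSeries.coeff_zero_eq_constantCoeff_apply, pochSelf, PowerSeries.coeff_mk, coeff_prod]
  have hps : ({0} : Finset ℕ).powerset = {∅, {0}} := rfl
  rw [Finset.range_one, hps, Finset.sum_pair (by decide : (∅ : Finset ℕ) ≠ {0})]
  simp [hm.ne']

lemma pochSelf_dvd_of_ne (m j : ℕ) (h : PowerSeries.coeff (R := ℤ) j (pochSelf m) ≠ 0) : m ∣ j := by
  rw [pochSelf, PowerSeries.coeff_mk, coeff_prod] at h
  obtain ⟨t, _, ht⟩ := Finset.exists_ne_zero_of_sum_ne_zero h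
  by_cases hc : m * (t.sum fun i => i + 1) = j
  · exact ⟨_, hc.symm⟩
  · simp [hc] at ht

lemma inv_coeff_eq_zero (m : ℕ) (hm : 0 < m) (j : ℕ) (hj : ¬ m ∣ j) :
    PowerSeries.coeff (R := ℤ) j (PowerSeries.invOfUnit (pochSelf m) 1) = 0 := by
  induction j using Nat.strong_induction_on with
  | _ j ih =>
    rw [PowerSeries.coeff_invOfUnit]
    have hj0 : j ≠ 0 := fun h => hj (h ▸ dvd_zero m)
    rw [if_neg hj0]
    have : (∑ x ∈ antidiagonal j,
        if x.2 < j then PowerSeries.coeff (R := ℤ) x.1 (pochSelf m) *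
          PowerSeries.coeff (R := ℤ) x.2 (PowerSeries.invOfUnit (pochSelf m) 1) else 0) = 0 := by
      apply Finset.sum_eq_zero
      intro x hx
      rw [Finset.HasAntidiagonal.mem_antidiagonal] at hx
      by_cases hlt : x.2 < j
      · rw [if_pos hlt]
        by_cases hd1 : m ∣ x.1
        · have hd2 : ¬ m ∣ x.2 := fun hd2 => hj (hx ▸ Dvd.dvd.add hd1 hd2)
          rw [ih x.2 hlt hd2, mul_zero]
        · rw [(by by_contra hc; exact hd1 (pochSelf_dvd_of_ne m x.1 hc) :
            PowerSeries.coeff (R := ℤ) x.1 (pochSelf m) = 0), zero_mul]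
      · rw [if_neg hlt]
    rw [this, mul_zero]


/-! ### Franklin's involution -/

/-- Sets of distinct positive integers summing to `a`. -/
def psets (a : ℕ) : Finset (Finset ℕ) :=
  (Finset.Icc 1 (a + 1)).powerset.filter fun S => S.sum id = a

lemma mem_psets {a : ℕ} {S : Finset ℕ} :
    S ∈ psets a ↔ (∀ x ∈ S, 1 ≤ x) ∧ S.sum id = a := by
  simp only [psets, Finset.mem_filter, Finset.mem_powerset]
  constructor
  · rintro ⟨hsub, hsum⟩
    exact ⟨fun x hx => (Finset.mem_Icc.mp (hsub hx)).1, hsum⟩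
  · rintro ⟨h1, hsum⟩
    refine ⟨fun x hx => Finset.mem_Icc.mpr ⟨h1 x hx, ?_⟩, hsum⟩
    have h2 : id x ≤ S.sum id := Finset.single_le_sum (fun i _ => Nat.zero_le _) hx
    rw [hsum] at h2
    simp only [id] at h2
    omega

def topM (S : Finset ℕ) : ℕ := S.sup id
noncomputable def botm (S : Finset ℕ) : ℕ := sInf (S : Set ℕ)
def runk (S : Finset ℕ) : ℕ := (S.filter fun x => Finset.Icc x (topM S) ⊆ S).card

noncomputable def phi (S : Finset ℕ) : Finset ℕ :=
  if botm S ≤ runk S then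
    ((S.erase (botm S)).filter fun x => x ≤ topM S - botm S) ∪
      Finset.Icc (topM S - botm S + 2) (topM S + 1)
  else
    insert (runk S) ((S.filter fun x => x < topM S + 1 - runk S) ∪
      Finset.Icc (topM S - runk S) (topM S - 1))

lemma le_topM {S : Finset ℕ} {x : ℕ} (hx : x ∈ S) : x ≤ topM S :=
  Finset.le_sup (f := id) hx

lemma topM_mem {S : Finset ℕ} (h : S.Nonempty) : topM S ∈ S := by
  obtain ⟨b, hb, he⟩ := Finset.exists_mem_eq_sup S h id
  rw [topM, he]; exact hb

lemma topM_eq {S : Finset ℕ} {x : ℕ} (hx : x ∈ S) (h : ∀ y ∈ S, y ≤ x) : topM S = x :=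
  le_antisymm (Finset.sup_le h) (le_topM hx)

lemma botm_le {S : Finset ℕ} {x : ℕ} (hx : x ∈ S) : botm S ≤ x :=
  Nat.sInf_le hx

lemma botm_mem {S : Finset ℕ} (h : S.Nonempty) : botm S ∈ S := by
  have : (↑S : Set ℕ).Nonempty := ⟨h.choose, h.choose_spec⟩
  exact Nat.sInf_mem this

lemma botm_eq {S : Finset ℕ} {x : ℕ} (hx : x ∈ S) (h : ∀ y ∈ S, x ≤ y) : botm S = x :=
  le_antisymm (botm_le hx) (h _ (botm_mem ⟨x, hx⟩))

lemma run_spec {S : Finset ℕ} (h0 : ∀ x ∈ S, 1 ≤ x) (hne : S.Nonempty) :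
    ∃ b, 1 ≤ b ∧ b ∈ S ∧ b + runk S = topM S + 1 ∧
      Finset.Icc b (topM S) ⊆ S ∧ b - 1 ∉ S := by
  set R := S.filter (fun x => Finset.Icc x (topM S) ⊆ S) with hR
  have hMR : topM S ∈ R := by
    rw [hR, Finset.mem_filter]
    refine ⟨topM_mem hne, ?_⟩
    rw [Finset.Icc_self]
    intro y hy
    rw [Finset.mem_singleton] at hy
    rw [hy]; exact topM_mem hne
  set b := botm R with hb
  have hbR : b ∈ R := botm_mem ⟨_, hMR⟩
  rw [hR, Finset.mem_filter] at hbR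
  obtain ⟨hbS, hbsub⟩ := hbR
  have hb1 : 1 ≤ b := h0 _ hbS
  have hbM : b ≤ topM S := le_topM hbS
  have hbnot : b - 1 ∉ S := by
    intro hcon
    have hsub : Finset.Icc (b - 1) (topM S) ⊆ S := by
      intro y hy
      rw [Finset.mem_Icc] at hy
      by_cases hyb : y = b - 1
      · rw [hyb]; exact hcon
      · exact hbsub (Finset.mem_Icc.mpr ⟨by omega, hy.2⟩)
    have : b - 1 ∈ R := by rw [hR, Finset.mem_filter]; exact ⟨hcon, hsub⟩
    have := botm_le this
    omega
  have hReq : R = Finset.Icc b (topM S) := by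
    apply Finset.Subset.antisymm
    · intro x hx
      have hxb : b ≤ x := botm_le hx
      rw [hR, Finset.mem_filter] at hx
      exact Finset.mem_Icc.mpr ⟨hxb, le_topM hx.1⟩
    · intro x hx
      rw [Finset.mem_Icc] at hx
      rw [hR, Finset.mem_filter]
      exact ⟨hbsub (Finset.mem_Icc.mpr hx), fun y hy => by
        rw [Finset.mem_Icc] at hy
        exact hbsub (Finset.mem_Icc.mpr ⟨by omega, hy.2⟩)⟩
  have hcard : runk S = topM S + 1 - b := by
    rw [runk, ← hR, hReq, Nat.card_Icc]
  exact ⟨b, hb1, hbS, by omega, hbsub, hbnot⟩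

lemma runk_ge {S : Finset ℕ} {c : ℕ} (hsub : Finset.Icc c (topM S) ⊆ S) :
    topM S + 1 - c ≤ runk S := by
  have : Finset.Icc c (topM S) ⊆ S.filter (fun x => Finset.Icc x (topM S) ⊆ S) := by
    intro x hx
    rw [Finset.mem_Icc] at hx
    rw [Finset.mem_filter]
    exact ⟨hsub (Finset.mem_Icc.mpr hx), fun y hy => by
      rw [Finset.mem_Icc] at hy
      exact hsub (Finset.mem_Icc.mpr ⟨by omega, hy.2⟩)⟩
  have := Finset.card_le_card this
  rw [Nat.card_Icc] at this
  rw [runk]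
  omega

lemma runk_eq_of {S : Finset ℕ} (h0 : ∀ x ∈ S, 1 ≤ x) (hne : S.Nonempty) {c : ℕ}
    (hc2 : c ≤ topM S) (hsub : Finset.Icc c (topM S) ⊆ S) (hnot : c - 1 ∉ S) (hc1 : 1 ≤ c) :
    c + runk S = topM S + 1 := by
  obtain ⟨b, hb1, hbS, hbk, hbsub, hbnot⟩ := run_spec h0 hne
  have hbM : b ≤ topM S := le_topM hbS
  have hbc : b = c := by
    rcases Nat.lt_trichotomy b c with h | h | h
    · exfalso
      exact hnot (hbsub (Finset.mem_Icc.mpr ⟨by omega, by omega⟩))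
    · exact h
    · exfalso
      exact hbnot (hsub (Finset.mem_Icc.mpr ⟨by omega, by omega⟩))
  omega

lemma sum_Icc_shift (u v : ℕ) :
    (Finset.Icc (u + 1) (v + 1)).sum id = (Finset.Icc u v).sum id + (Finset.Icc u v).card := by
  have himg : Finset.Icc (u + 1) (v + 1) = (Finset.Icc u v).image (· + 1) := by
    rw [Finset.image_add_right_Icc]
  rw [himg, Finset.sum_image (by intro x _ y _ h; simp only at h; omega)]
  simp only [id]
  rw [Finset.sum_add_distrib, Finset.sum_const, smul_eq_mul, mul_one]

lemma sum_Icc_eq (u v : ℕ) : 2 * (Finset.Icc u v).sum id = (u + v) * (v + 1 - u) := by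
  by_cases h : u ≤ v
  · have hIco : Finset.Icc u v = Finset.Ico u (v + 1) := by
      ext x; simp [Finset.mem_Icc, Finset.mem_Ico]
    rw [hIco, Finset.sum_Ico_eq_sum_range]
    set n := v + 1 - u with hn
    have hvn : v + 1 = u + n := by omega
    simp only [id]
    rw [Finset.sum_add_distrib, Finset.sum_const, Finset.card_range, smul_eq_mul]
    have hg := Finset.sum_range_id_mul_two n
    have hn1 : 1 ≤ n := by omega
    zify [hn1] at hg
    zify
    linear_combination hg - (n : ℤ) * (by exact_mod_cast congrArg (Nat.cast : ℕ → ℤ) hvn : ((v : ℤ) + 1 = u + n))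
  · rw [Finset.Icc_eq_empty h]
    have hz : v + 1 - u = 0 := by omega
    rw [hz, mul_zero]
    simp

/-- Case 1 of Franklin's involution: smallest part `≤` run length. -/
lemma phi_case1 {S : Finset ℕ} (h0 : ∀ x ∈ S, 1 ≤ x) (hne : S.Nonempty)
    (h1 : botm S ≤ runk S) (hexc : S ≠ Finset.Icc (botm S) (2 * botm S - 1)) :
    (∀ x ∈ phi S, 1 ≤ x) ∧ (phi S).sum id = S.sum id ∧ (phi S).card + 1 = S.card ∧
      phi (phi S) = S := by
  obtain ⟨b, hb1, hbS, hbk, hbsub, hbnot⟩ := run_spec h0 hne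
  set M := topM S with hM
  set s := botm S with hs
  set k := runk S with hk
  have hMS : M ∈ S := topM_mem hne
  have hsS : s ∈ S := botm_mem hne
  have hs1 : 1 ≤ s := h0 _ hsS
  have hsM : s ≤ M := le_topM hsS
  have hsb : s ≤ b := botm_le hbS
  have hbM : b ≤ M := le_topM hbS
  -- M ≥ 2s
  have hM2s : 2 * s ≤ M := by
    by_contra hcon
    have hbs : b = s := by omega
    have hSeq : S = Finset.Icc s M := by
      apply Finset.Subset.antisymm
      · intro x hx
        exact Finset.mem_Icc.mpr ⟨botm_le hx, le_topM hx⟩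
      · rw [← hbs]; exact hbsub
    apply hexc
    rw [hSeq]
    congr 1
    omega
  set A := (S.erase s).filter (fun x => x ≤ M - s) with hA
  have hphi : phi S = A ∪ Finset.Icc (M - s + 2) (M + 1) := by
    simp only [phi]
    rw [if_pos h1]
  have hIccSub : Finset.Icc (M - s + 1) M ⊆ S := by
    intro x hx
    rw [Finset.mem_Icc] at hx
    exact hbsub (Finset.mem_Icc.mpr ⟨by omega, hx.2⟩)
  have hAmem : ∀ x, x ∈ A ↔ (x ∈ S ∧ x ≠ s ∧ x ≤ M - s) := by
    intro x
    rw [hA, Finset.mem_filter, Finset.mem_erase]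
    tauto
  have hAup : ∀ x ∈ A, s + 1 ≤ x := by
    intro x hx
    rw [hAmem] at hx
    have := botm_le hx.1
    have := hx.2.1
    omega
  have hSdec : ∀ x, x ∈ S ↔ (x ∈ A ∨ x = s ∨ (M - s + 1 ≤ x ∧ x ≤ M)) := by
    intro x
    constructor
    · intro hx
      by_cases hxs : x = s
      · right; left; exact hxs
      · by_cases hxle : x ≤ M - s
        · left; rw [hAmem]; exact ⟨hx, hxs, hxle⟩
        · right; right; exact ⟨by omega, le_topM hx⟩
    · rintro (hx | rfl | hx)
      · exact ((hAmem x).mp hx).1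
      · exact hsS
      · exact hIccSub (Finset.mem_Icc.mpr hx)
  have hpos : ∀ x ∈ phi S, 1 ≤ x := by
    intro x hx
    rw [hphi, Finset.mem_union] at hx
    rcases hx with hx | hx
    · exact h0 _ (((hAmem x).mp hx).1)
    · rw [Finset.mem_Icc] at hx; omega
  have hdisj1 : Disjoint A (Finset.Icc (M - s + 2) (M + 1)) := by
    rw [Finset.disjoint_left]
    intro x hx hx2
    rw [hAmem] at hx
    rw [Finset.mem_Icc] at hx2
    omega
  have hsub2 : s ∉ A := fun hx => ((hAmem s).mp hx).2.1 rfl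
  have hdisj2 : Disjoint (insert s A) (Finset.Icc (M - s + 1) M) := by
    rw [Finset.disjoint_left]
    intro x hx hx2
    rw [Finset.mem_insert] at hx
    rw [Finset.mem_Icc] at hx2
    rcases hx with rfl | hx
    · omega
    · rw [hAmem] at hx; omega
  have hSeq2 : S = (insert s A) ∪ Finset.Icc (M - s + 1) M := by
    ext x
    rw [Finset.mem_union, Finset.mem_insert, Finset.mem_Icc, hSdec]
    tauto
  have hcardI1 : (Finset.Icc (M - s + 1) M).card = s := by rw [Nat.card_Icc]; omega
  have hcardI2 : (Finset.Icc (M - s + 2) (M + 1)).card = s := by rw [Nat.card_Icc]; omega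
  have hsumI2 : (Finset.Icc (M - s + 2) (M + 1)).sum id
      = (Finset.Icc (M - s + 1) M).sum id + s := by
    have h' := sum_Icc_shift (M - s + 1) M
    rw [hcardI1] at h'
    have he : M - s + 1 + 1 = M - s + 2 := by omega
    rw [he] at h'
    exact h'
  have hsumS : S.sum id = A.sum id + s + (Finset.Icc (M - s + 1) M).sum id := by
    conv_lhs => rw [hSeq2]
    rw [Finset.sum_union hdisj2, Finset.sum_insert hsub2]
    simp only [id_eq]
    ring
  have hsumphi : (phi S).sum id = S.sum id := by
    rw [hphi, Finset.sum_union hdisj1, hsumI2, hsumS]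
    simp only [id_eq]
    ring
  have hcardS : S.card = A.card + 1 + s := by
    conv_lhs => rw [hSeq2]
    rw [Finset.card_union_of_disjoint hdisj2, Finset.card_insert_of_notMem hsub2, hcardI1]
  have hcardphi : (phi S).card + 1 = S.card := by
    rw [hphi, Finset.card_union_of_disjoint hdisj1, hcardI2, hcardS]
    omega
  refine ⟨hpos, hsumphi, hcardphi, ?_⟩
  set S' := phi S with hS'
  have hmemS' : ∀ x, x ∈ S' ↔ (x ∈ A ∨ (M - s + 2 ≤ x ∧ x ≤ M + 1)) := by
    intro x
    rw [hphi, Finset.mem_union, Finset.mem_Icc]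
  have hM1S' : M + 1 ∈ S' := by rw [hmemS']; right; omega
  have hne' : S'.Nonempty := ⟨_, hM1S'⟩
  have h0' : ∀ x ∈ S', 1 ≤ x := hpos
  have helem : ∀ x ∈ S', s + 1 ≤ x := by
    intro x hx
    rw [hmemS'] at hx
    rcases hx with hx | hx
    · exact hAup _ hx
    · omega
  have hM' : topM S' = M + 1 := by
    apply topM_eq hM1S'
    intro y hy
    rw [hmemS'] at hy
    rcases hy with hy | hy
    · rw [hAmem] at hy; omega
    · omega
  have hks' : runk S' = s := by
    have hsub' : Finset.Icc (M - s + 2) (topM S') ⊆ S' := by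
      rw [hM']
      intro x hx
      rw [hmemS']; right; exact Finset.mem_Icc.mp hx
    have hnot' : (M - s + 2) - 1 ∉ S' := by
      intro hx
      rw [hmemS'] at hx
      rcases hx with hx | hx
      · rw [hAmem] at hx; omega
      · omega
    have h' := runk_eq_of h0' hne' (by rw [hM']; omega) hsub' hnot' (by omega)
    rw [hM'] at h'
    omega
  have hbot' : runk S' < botm S' := by
    have := helem _ (botm_mem hne')
    omega
  simp only [phi]
  rw [if_neg (by omega : ¬ botm S' ≤ runk S')]
  rw [hM', hks']
  have hfilt : (S'.filter fun x => x < M + 1 + 1 - s) = A := by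
    ext x
    rw [Finset.mem_filter, hmemS']
    constructor
    · rintro ⟨hx | hx, hlt⟩
      · exact hx
      · exfalso; omega
    · intro hx
      have := (hAmem x).mp hx
      exact ⟨Or.inl hx, by omega⟩
  rw [hfilt]
  have he1 : M + 1 - s = M - s + 1 := by omega
  have he2 : M + 1 - 1 = M := by omega
  rw [he1, he2]
  ext x
  rw [Finset.mem_insert, Finset.mem_union, Finset.mem_Icc, hSdec]
  tauto

/-- Case 2 of Franklin's involution: smallest part `>` run length. -/
lemma phi_case2 {S : Finset ℕ} (h0 : ∀ x ∈ S, 1 ≤ x) (hne : S.Nonempty)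
    (h2 : runk S < botm S) (hexc : S ≠ Finset.Icc (runk S + 1) (2 * runk S)) :
    (∀ x ∈ phi S, 1 ≤ x) ∧ (phi S).sum id = S.sum id ∧ (phi S).card = S.card + 1 ∧
      phi (phi S) = S := by
  obtain ⟨b, hb1, hbS, hbk, hbsub, hbnot⟩ := run_spec h0 hne
  set M := topM S with hM
  set s := botm S with hs
  set k := runk S with hk
  have hMS : M ∈ S := topM_mem hne
  have hsS : s ∈ S := botm_mem hne
  have hs1 : 1 ≤ s := h0 _ hsS
  have hsM : s ≤ M := le_topM hsS
  have hsb : s ≤ b := botm_le hbS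
  have hbM : b ≤ M := le_topM hbS
  have hk1 : 1 ≤ k := by omega
  -- M ≥ 2k+1
  have hM2k : 2 * k + 1 ≤ M := by
    by_contra hcon
    have hbs : b = k + 1 ∧ s = k + 1 ∧ M = 2 * k := by omega
    have hSeq : S = Finset.Icc (k + 1) (2 * k) := by
      apply Finset.Subset.antisymm
      · intro x hx
        rw [Finset.mem_Icc]
        have := botm_le hx
        have := le_topM hx
        omega
      · have : Finset.Icc (k + 1) (2 * k) = Finset.Icc b M := by
          rw [hbs.1, hbs.2.2]
        rw [this]
        exact hbsub
    exact hexc hSeq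
  set C := S.filter (fun x => x < M + 1 - k) with hC
  have hphi : phi S = insert k (C ∪ Finset.Icc (M - k) (M - 1)) := by
    simp only [phi]
    rw [if_neg (by omega)]
  have hCmem : ∀ x, x ∈ C ↔ (x ∈ S ∧ x < b) := by
    intro x
    rw [hC, Finset.mem_filter]
    constructor
    · rintro ⟨hx, hlt⟩; exact ⟨hx, by omega⟩
    · rintro ⟨hx, hlt⟩; exact ⟨hx, by omega⟩
  have hCub : ∀ x ∈ C, s ≤ x ∧ x ≤ b - 2 := by
    intro x hx
    rw [hCmem] at hx
    have hxb : x ≠ b - 1 := fun h => hbnot (h ▸ hx.1)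
    exact ⟨botm_le hx.1, by omega⟩
  have hSdec : ∀ x, x ∈ S ↔ (x ∈ C ∨ (b ≤ x ∧ x ≤ M)) := by
    intro x
    constructor
    · intro hx
      by_cases hxb : x < b
      · left; rw [hCmem]; exact ⟨hx, hxb⟩
      · right; exact ⟨by omega, le_topM hx⟩
    · rintro (hx | hx)
      · exact ((hCmem x).mp hx).1
      · exact hbsub (Finset.mem_Icc.mpr hx)
  have hkC : k ∉ C := fun h => by have := hCub _ h; omega
  have hkI : k ∉ Finset.Icc (M - k) (M - 1) := by
    rw [Finset.mem_Icc]; omega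
  have hkCI : k ∉ C ∪ Finset.Icc (M - k) (M - 1) := by
    rw [Finset.mem_union]; rintro (h | h); exacts [hkC h, hkI h]
  have hdisj0 : Disjoint C (Finset.Icc (M - k) (M - 1)) := by
    rw [Finset.disjoint_left]
    intro x hx hx2
    have := hCub _ hx
    rw [Finset.mem_Icc] at hx2
    omega
  have hdisjS : Disjoint C (Finset.Icc b M) := by
    rw [Finset.disjoint_left]
    intro x hx hx2
    have := hCub _ hx
    rw [Finset.mem_Icc] at hx2
    omega
  have hSeq2 : S = C ∪ Finset.Icc b M := by
    ext x
    rw [Finset.mem_union, Finset.mem_Icc, hSdec]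
  have hcardI0 : (Finset.Icc (M - k) (M - 1)).card = k := by rw [Nat.card_Icc]; omega
  have hcardI : (Finset.Icc b M).card = k := by rw [Nat.card_Icc]; omega
  have hsumI : (Finset.Icc b M).sum id = (Finset.Icc (M - k) (M - 1)).sum id + k := by
    have h' := sum_Icc_shift (M - k) (M - 1)
    rw [hcardI0] at h'
    have he : M - k + 1 = b := by omega
    have he2 : M - 1 + 1 = M := by omega
    rw [he, he2] at h'
    exact h'
  have hsumS : S.sum id = C.sum id + (Finset.Icc (M - k) (M - 1)).sum id + k := by
    conv_lhs => rw [hSeq2]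
    rw [Finset.sum_union hdisjS, hsumI]
    simp only [id_eq]
    ring
  have hsumphi : (phi S).sum id = S.sum id := by
    rw [hphi, Finset.sum_insert hkCI, Finset.sum_union hdisj0, hsumS]
    simp only [id_eq]
    ring
  have hcardS : S.card = C.card + k := by
    conv_lhs => rw [hSeq2]
    rw [Finset.card_union_of_disjoint hdisjS, hcardI]
  have hcardphi : (phi S).card = S.card + 1 := by
    rw [hphi, Finset.card_insert_of_notMem hkCI, Finset.card_union_of_disjoint hdisj0,
      hcardI0, hcardS]
  have hpos : ∀ x ∈ phi S, 1 ≤ x := by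
    intro x hx
    rw [hphi, Finset.mem_insert, Finset.mem_union, Finset.mem_Icc] at hx
    rcases hx with rfl | hx | hx
    · omega
    · exact h0 _ (((hCmem x).mp hx).1)
    · omega
  refine ⟨hpos, hsumphi, hcardphi, ?_⟩
  set S' := phi S with hS'
  have hmemS' : ∀ x, x ∈ S' ↔ (x = k ∨ x ∈ C ∨ (M - k ≤ x ∧ x ≤ M - 1)) := by
    intro x
    rw [hphi, Finset.mem_insert, Finset.mem_union, Finset.mem_Icc]
  have hkS' : k ∈ S' := by rw [hmemS']; left; rfl
  have hne' : S'.Nonempty := ⟨_, hkS'⟩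
  have h0' : ∀ x ∈ S', 1 ≤ x := hpos
  have hM' : topM S' = M - 1 := by
    apply topM_eq
    · rw [hmemS']; right; right; omega
    · intro y hy
      rw [hmemS'] at hy
      rcases hy with rfl | hy | hy
      · omega
      · have := hCub _ hy; omega
      · omega
  have hbot' : botm S' = k := by
    apply botm_eq hkS'
    intro y hy
    rw [hmemS'] at hy
    rcases hy with rfl | hy | hy
    · omega
    · have := hCub _ hy; omega
    · omega
  have hks' : k ≤ runk S' := by
    have hsub' : Finset.Icc (M - k) (topM S') ⊆ S' := by
      rw [hM']
      intro x hx
      rw [hmemS']; right; right; exact Finset.mem_Icc.mp hx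
    have h' := runk_ge hsub'
    rw [hM'] at h'
    omega
  simp only [phi]
  rw [if_pos (by omega : botm S' ≤ runk S')]
  rw [hM', hbot']
  have herase : S'.erase k = C ∪ Finset.Icc (M - k) (M - 1) := by
    rw [hphi]
    exact Finset.erase_insert hkCI
  rw [herase]
  have hfilt : ((C ∪ Finset.Icc (M - k) (M - 1)).filter fun x => x ≤ M - 1 - k) = C := by
    ext x
    rw [Finset.mem_filter, Finset.mem_union, Finset.mem_Icc]
    constructor
    · rintro ⟨hx | hx, hle⟩
      · exact hx
      · exfalso; omega
    · intro hx
      have := hCub _ hx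
      exact ⟨Or.inl hx, by omega⟩
  rw [hfilt]
  have he1 : M - 1 - k + 2 = b := by omega
  have he2 : M - 1 + 1 = M := by omega
  rw [he1, he2]
  ext x
  rw [Finset.mem_union, Finset.mem_Icc, hSdec]

lemma phi_good {a : ℕ} (h : ∀ c : ℤ, (24 * (a : ℤ) + 1) ≠ c ^ 2) {S : Finset ℕ}
    (hS : S ∈ psets a) :
    phi S ∈ psets a ∧ ((-1 : ℤ) ^ S.card + (-1 : ℤ) ^ (phi S).card = 0) ∧
      phi S ≠ S ∧ phi (phi S) = S := by
  obtain ⟨h0, hsum⟩ := mem_psets.mp hS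
  have ha : 1 ≤ a := by
    by_contra hcon
    exact h 1 (by interval_cases a <;> norm_num)
  have hne : S.Nonempty := by
    rcases S.eq_empty_or_nonempty with rfl | hne
    · simp at hsum; omega
    · exact hne
  have hexc1 : S ≠ Finset.Icc (botm S) (2 * botm S - 1) := by
    intro heq
    set u := botm S with hu
    have hu1 : 1 ≤ u := h0 _ (botm_mem hne)
    have h2a : 2 * a = (u + (2 * u - 1)) * ((2 * u - 1) + 1 - u) := by
      rw [← hsum, heq, sum_Icc_eq]
    have e1 : u + (2 * u - 1) = 3 * u - 1 := by omega
    have e2 : (2 * u - 1) + 1 - u = u := by omega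
    rw [e1, e2] at h2a
    apply h (6 * (u : ℤ) - 1)
    have hcast : (2 * a : ℤ) = (3 * (u : ℤ) - 1) * (u : ℤ) := by
      have h3 : (1 : ℕ) ≤ 3 * u := by omega
      zify [h3] at h2a
      exact h2a
    linear_combination 12 * hcast
  have hexc2 : S ≠ Finset.Icc (runk S + 1) (2 * runk S) := by
    intro heq
    set v := runk S with hv
    have hv1 : 1 ≤ v := by
      have := hne
      rw [heq] at this
      have := Finset.nonempty_Icc.mp this
      omega
    have h2a : 2 * a = ((v + 1) + 2 * v) * (2 * v + 1 - (v + 1)) := by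
      rw [← hsum, heq, sum_Icc_eq]
    have e1 : (v + 1) + 2 * v = 3 * v + 1 := by omega
    have e2 : 2 * v + 1 - (v + 1) = v := by omega
    rw [e1, e2] at h2a
    apply h (6 * (v : ℤ) + 1)
    have hcast : (2 * a : ℤ) = (3 * (v : ℤ) + 1) * (v : ℤ) := by
      zify at h2a
      exact h2a
    linear_combination 12 * hcast
  by_cases hcase : botm S ≤ runk S
  · obtain ⟨hp0, hpsum, hpcard, hpp⟩ := phi_case1 h0 hne hcase hexc1
    refine ⟨mem_psets.mpr ⟨hp0, by rw [hpsum, hsum]⟩, ?_, ?_, hpp⟩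
    · rw [← hpcard, pow_succ]
      ring
    · intro heq
      rw [heq] at hpcard
      omega
  · obtain ⟨hp0, hpsum, hpcard, hpp⟩ := phi_case2 h0 hne (by omega) hexc2
    refine ⟨mem_psets.mpr ⟨hp0, by rw [hpsum, hsum]⟩, ?_, ?_, hpp⟩
    · rw [hpcard, pow_succ]
      ring
    · intro heq
      rw [heq] at hpcard
      omega

lemma franklin (a : ℕ) (h : ∀ c : ℤ, (24 * (a : ℤ) + 1) ≠ c ^ 2) :
    ∑ S ∈ psets a, (-1 : ℤ) ^ S.card = 0 := by
  apply Finset.sum_involution (fun S _ => phi S)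
  · intro S hS
    exact (phi_good h hS).2.1
  · intro S hS _
    exact (phi_good h hS).2.2.1
  · intro S hS
    exact (phi_good h hS).1
  · intro S hS
    exact (phi_good h hS).2.2.2

lemma coeff_eq (a : ℕ) :
    PowerSeries.coeff (R := ℤ) a (pochSelf 1) = ∑ S ∈ psets a, (-1 : ℤ) ^ S.card := by
  rw [pochSelf, PowerSeries.coeff_mk, coeff_prod]
  simp only [one_mul]
  rw [← Finset.sum_filter]
  apply Finset.sum_nbij' (i := fun t => t.image (· + 1)) (j := fun S => S.image (· - 1))
  · intro t ht
    rw [Finset.mem_filter, Finset.mem_powerset] at ht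
    apply mem_psets.mpr
    constructor
    · intro x hx
      rw [Finset.mem_image] at hx
      obtain ⟨y, _, rfl⟩ := hx
      omega
    · rw [Finset.sum_image (by intro x _ y _ hxy; simp only at hxy; omega)]
      simpa using ht.2
  · intro S hS
    obtain ⟨h0, hsum⟩ := mem_psets.mp hS
    rw [Finset.mem_filter, Finset.mem_powerset]
    constructor
    · intro x hx
      rw [Finset.mem_image] at hx
      obtain ⟨y, hy, rfl⟩ := hx
      have h1 : 1 ≤ y := h0 _ hy
      have h2 : id y ≤ S.sum id := Finset.single_le_sum (fun i _ => Nat.zero_le _) hy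
      rw [hsum] at h2
      simp only [id_eq] at h2
      rw [Finset.mem_range]
      omega
    · rw [Finset.sum_image (by intro x hx y hy hxy; have := h0 _ hx; have := h0 _ hy; simp only at hxy; omega)]
      rw [← hsum]
      apply Finset.sum_congr rfl
      intro x hx
      have := h0 _ hx
      simp only [id_eq]
      omega
  · intro t ht
    rw [Finset.image_image]
    have : ((fun x => x - 1) ∘ fun x => x + 1) = id := by funext x; simp
    rw [this, Finset.image_id]
  · intro S hS
    obtain ⟨h0, _⟩ := mem_psets.mp hS
    rw [Finset.image_image]
    apply Finset.image_congr (g := id) ?_ |>.trans (Finset.image_id)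
    intro x hx
    have := h0 _ hx
    simp only [Function.comp_apply, id_eq]
    omega
  · intro t ht
    rw [Finset.card_image_of_injective _ (by intro x y hxy; simpa using hxy)]

/-- The pentagonal-number support property: a nonzero coefficient of `(q;q)_∞`
occurs only at indices `a` with `24 a + 1` a perfect square. -/
lemma sq_of_coeff_ne (a : ℕ) (h : PowerSeries.coeff (R := ℤ) a (pochSelf 1) ≠ 0) :
    ∃ c : ℤ, (24 * a + 1 : ℤ) = c ^ 2 := by
  by_contra hc
  push_neg at hc
  apply h
  rw [coeff_eq]
  exact franklin a hc

end PentAux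

/-- Every coefficient of `q^{pn+r}` in `(q;q)_∞ / (q^{pℓ};q^{pℓ})_∞` vanishes,
when `24r+1` is a quadratic nonresidue mod the prime `p ≥ 5` and `0 < r < p`. -/
theorem coeff_eta_div_vanishes (p : ℕ) (hp : p.Prime) (hp5 : 5 ≤ p)
    (l : ℕ) (hl : 0 < l) (r : ℕ) (hr0 : 0 < r) (hrp : r < p)
    (hqnr : ¬ IsSquare ((24 * r + 1 : ℕ) : ZMod p)) (n : ℕ) :
    PowerSeries.coeff (R := ℤ) (p * n + r)
      (pochSelf 1 * PowerSeries.invOfUnit (pochSelf (p * l)) 1) = 0 := by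
  rw [PowerSeries.coeff_mul]
  apply Finset.sum_eq_zero
  intro x hx
  rw [Finset.HasAntidiagonal.mem_antidiagonal] at hx
  by_cases hB : PowerSeries.coeff (R := ℤ) x.2 (PowerSeries.invOfUnit (pochSelf (p * l)) 1) = 0
  · rw [hB, mul_zero]
  have hdvd : p ∣ x.2 := by
    by_contra hnd
    exact hB (PentAux.inv_coeff_eq_zero (p * l) (Nat.mul_pos hp.pos hl) _
      (fun hd => hnd (dvd_trans (Dvd.intro l rfl) hd)))
  suffices hA : PowerSeries.coeff (R := ℤ) x.1 (pochSelf 1) = 0 by rw [hA, zero_mul]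
  by_contra hA
  obtain ⟨c, hc⟩ := PentAux.sq_of_coeff_ne x.1 hA
  apply hqnr
  obtain ⟨t, ht⟩ := hdvd
  have hx1 : ((x.1 : ℕ) : ZMod p) = ((r : ℕ) : ZMod p) := by
    have := congrArg (Nat.cast : ℕ → ZMod p) hx
    rw [ht] at this
    push_cast [ZMod.natCast_self] at this
    simpa using this
  have key : ((24 * r + 1 : ℕ) : ZMod p) = ((c : ZMod p)) * ((c : ZMod p)) := by
    have h2 : ((24 * x.1 + 1 : ℤ) : ZMod p) = ((c : ZMod p)) * ((c : ZMod p)) := by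
      rw [hc]; push_cast; ring
    rw [← h2]
    push_cast
    rw [hx1]
  exact ⟨_, key⟩
end

section
/- Let p ≥ 5 be prime and r with 0 < r < p such that 24r+1 is a quadratic nonresidue mod p. If f(q) is any formal power series over ℤ in the variable q^p (i.e., f(q) = g(q^p) for some power series g), then for all n ≥ 0 the coefficient of q^{pn+r} in (q;q)_∞ · f(q) vanishes modulo p... in fact vanishes identically over ℤ. -/
set_option linter.unusedSectionVars false
set_option linter.unusedVariables false
set_option linter.unnecessarySimpa false

section FranklinAux

open Finset

namespace Franklin

/-- max with default 0 -/
noncomputable def mx (S : Finset ℕ) : ℕ := S.max.getD 0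
/-- min with default 0 -/
noncomputable def mn (S : Finset ℕ) : ℕ := S.min.getD 0

lemma stex (S : Finset ℕ) : ∃ j, mx S - j ∉ S ∨ mx S < j := ⟨mx S + 1, Or.inr (by omega)⟩

/-- staircase length -/
noncomputable def st (S : Finset ℕ) : ℕ := Nat.find (stex S)

variable {S : Finset ℕ}

lemma mx_mem (h : S.Nonempty) : mx S ∈ S := by
  have := Finset.max'_mem S h
  rwa [mx, ← Finset.coe_max' h]
lemma mn_mem (h : S.Nonempty) : mn S ∈ S := by
  have := Finset.min'_mem S h
  rwa [mn, ← Finset.coe_min' h]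
lemma le_mx (h : S.Nonempty) {x : ℕ} (hx : x ∈ S) : x ≤ mx S := by
  rw [mx, ← Finset.coe_max' h]; exact Finset.le_max' S x hx
lemma mn_le (h : S.Nonempty) {x : ℕ} (hx : x ∈ S) : mn S ≤ x := by
  rw [mn, ← Finset.coe_min' h]; exact Finset.min'_le S x hx

section basic
variable (hne : S.Nonempty) (hpos : 0 ∉ S)
include hne hpos

lemma st_le_mx : st S ≤ mx S :=
  Nat.find_le (Or.inl (by simpa using hpos))

lemma st_pos : 0 < st S := by
  rw [Nat.pos_iff_ne_zero]
  intro h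
  have h2 := Nat.find_spec (stex S)
  rw [show Nat.find (stex S) = st S from rfl, h] at h2
  simp only [Nat.sub_zero] at h2
  rcases h2 with h1 | h1
  · exact h1 (mx_mem hne)
  · omega

omit hne hpos in
lemma mem_of_lt_st {i : ℕ} (hi : i < st S) : mx S - i ∈ S := by
  have h := Nat.find_min (stex S) (show i < Nat.find (stex S) from hi)
  push_neg at h
  exact h.1

lemma sub_st_not_mem : mx S - st S ∉ S := by
  have h1 := Nat.find_spec (stex S)
  rw [show Nat.find (stex S) = st S from rfl] at h1
  have h2 := st_le_mx hne hpos
  rcases h1 with h | h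
  · exact h
  · omega

/-- the top `st S` elements form the interval `Ioc (mx S - st S) (mx S)`. -/
lemma Ioc_subset : Finset.Ioc (mx S - st S) (mx S) ⊆ S := by
  intro x hx
  rw [Finset.mem_Ioc] at hx
  have : x = mx S - (mx S - x) := by omega
  rw [this]
  exact mem_of_lt_st (by omega)

lemma st_le_card : st S ≤ S.card := by
  have h1 := Ioc_subset hne hpos
  have h2 := Finset.card_le_card h1
  rwa [Nat.card_Ioc, Nat.sub_sub_self (st_le_mx hne hpos)] at h2

/-- if card = st then S is exactly the staircase -/
lemma eq_Ioc_of_card (h : S.card = st S) : S = Finset.Ioc (mx S - st S) (mx S) := by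
  symm
  apply Finset.eq_of_subset_of_card_le (Ioc_subset hne hpos)
  rw [Nat.card_Ioc, Nat.sub_sub_self (st_le_mx hne hpos), h]

end basic

end Franklin

namespace Franklin

variable {S : Finset ℕ}

lemma mx_eq {a : ℕ} (h1 : a ∈ S) (h2 : ∀ x ∈ S, x ≤ a) : mx S = a := by
  have hne : S.Nonempty := ⟨a, h1⟩
  exact le_antisymm (h2 _ (mx_mem hne)) (le_mx hne h1)

lemma mn_eq {a : ℕ} (h1 : a ∈ S) (h2 : ∀ x ∈ S, a ≤ x) : mn S = a := by
  have hne : S.Nonempty := ⟨a, h1⟩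
  exact le_antisymm (mn_le hne h1) (h2 _ (mn_mem hne))

lemma st_eq {a : ℕ} (h1 : mx S - a ∉ S) (h2 : ∀ i < a, mx S - i ∈ S) (h3 : a ≤ mx S) :
    st S = a := by
  apply le_antisymm (Nat.find_le (Or.inl h1))
  by_contra hlt
  push_neg at hlt
  have hspec := Nat.find_spec (stex S)
  rw [show Nat.find (stex S) = st S from rfl] at hspec
  have hfind : st S = Nat.find (stex S) := rfl
  rcases hspec with h | h
  · exact h (h2 _ hlt)
  · omega

lemma st_ge {a : ℕ} (h2 : ∀ i < a, mx S - i ∈ S) (h3 : a ≤ mx S + 1) : a ≤ st S := by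
  rw [show st S = Nat.find (stex S) from rfl, Nat.le_find_iff]
  intro m hm
  push_neg
  exact ⟨h2 _ hm, by omega⟩

/-- Franklin's involution. -/
noncomputable def fr (S : Finset ℕ) : Finset ℕ :=
  if mn S ≤ st S then
    insert (mx S + 1) ((S.erase (mn S)).erase (mx S - mn S + 1))
  else
    insert (st S) (insert (mx S - st S) (S.erase (mx S)))

section caseA

variable (hne : S.Nonempty) (hpos : 0 ∉ S)
  (hA1 : mn S ≤ st S) (hA2 : mn S < S.card) (hA3 : 2 * mn S ≤ mx S)
include hne hpos hA1 hA2 hA3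

lemma A_def : fr S = insert (mx S + 1) ((S.erase (mn S)).erase (mx S - mn S + 1)) :=
  if_pos hA1

lemma A_mem_aux : mx S - mn S + 1 ∈ S.erase (mn S) := by
  have h0 : 0 < mn S := Nat.pos_of_ne_zero (fun h => hpos (h ▸ mn_mem hne))
  have h1 : mx S - (mn S - 1) ∈ S := mem_of_lt_st (by omega)
  have h2 : mx S - (mn S - 1) = mx S - mn S + 1 := by omega
  rw [Finset.mem_erase]
  exact ⟨by omega, h2 ▸ h1⟩

lemma A_top_not_mem : mx S + 1 ∉ (S.erase (mn S)).erase (mx S - mn S + 1) := by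
  intro h
  have := le_mx hne (Finset.mem_of_mem_erase (Finset.mem_of_mem_erase h))
  omega

lemma A_sum : ∑ x ∈ fr S, x = ∑ x ∈ S, x := by
  rw [A_def hne hpos hA1 hA2 hA3]
  have h0 : 0 < mn S := Nat.pos_of_ne_zero (fun h => hpos (h ▸ mn_mem hne))
  rw [Finset.sum_insert (A_top_not_mem hne hpos hA1 hA2 hA3)]
  have e1 := Finset.add_sum_erase _ id (A_mem_aux hne hpos hA1 hA2 hA3)
  have e2 := Finset.add_sum_erase _ id (mn_mem hne)
  simp only [id] at e1 e2
  omega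

lemma A_card : (fr S).card + 2 = S.card + 1 := by
  rw [A_def hne hpos hA1 hA2 hA3]
  rw [Finset.card_insert_of_notMem (A_top_not_mem hne hpos hA1 hA2 hA3)]
  rw [Finset.card_erase_of_mem (A_mem_aux hne hpos hA1 hA2 hA3),
    Finset.card_erase_of_mem (mn_mem hne)]
  have h0 : 0 < mn S := Nat.pos_of_ne_zero (fun h => hpos (h ▸ mn_mem hne))
  omega

lemma A_pos : 0 ∉ fr S := by
  rw [A_def hne hpos hA1 hA2 hA3]
  intro h
  rcases Finset.mem_insert.1 h with h | h
  · omega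
  · exact hpos (Finset.mem_of_mem_erase (Finset.mem_of_mem_erase h))

lemma A_mx : mx (fr S) = mx S + 1 := by
  rw [A_def hne hpos hA1 hA2 hA3]
  apply mx_eq (Finset.mem_insert_self _ _)
  intro x hx
  rcases Finset.mem_insert.1 hx with h | h
  · omega
  · have := le_mx hne (Finset.mem_of_mem_erase (Finset.mem_of_mem_erase h))
    omega

lemma A_mn_gt : mn S < mn (fr S) := by
  have h1 : fr S = _ := A_def hne hpos hA1 hA2 hA3
  have hne' : (fr S).Nonempty := ⟨mx S + 1, by rw [h1]; exact Finset.mem_insert_self _ _⟩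
  have h2 := mn_mem hne'
  rw [h1] at h2 ⊢
  rw [Finset.mem_insert] at h2
  rcases h2 with h | h
  · have := mn_le hne (mx_mem hne); omega
  · rw [Finset.mem_erase, Finset.mem_erase] at h
    have := mn_le hne h.2.2
    omega

lemma A_st : st (fr S) = mn S := by
  have h0 : 0 < mn S := Nat.pos_of_ne_zero (fun h => hpos (h ▸ mn_mem hne))
  have hd : fr S = _ := A_def hne hpos hA1 hA2 hA3
  have hmx : mx (fr S) = mx S + 1 := A_mx hne hpos hA1 hA2 hA3
  have hstS : st S ≤ mx S := st_le_mx hne hpos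
  apply st_eq
  · -- mx (fr S) - mn S ∉ fr S
    rw [hmx, hd]
    simp only [Finset.mem_insert, Finset.mem_erase, not_or]
    constructor
    · omega
    · intro h
      exact h.2.1 (by omega)
  · intro i hi
    rw [hmx, hd]
    rcases Nat.eq_zero_or_pos i with rfl | hipos
    · simp only [Nat.sub_zero]
      exact Finset.mem_insert_self _ _
    · have hmem : mx S - (i - 1) ∈ S := mem_of_lt_st (by omega)
      apply Finset.mem_insert_of_mem
      have hge : mx S - (i-1) ≥ mx S - mn S + 2 := by omega
      rw [Finset.mem_erase, Finset.mem_erase]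
      refine ⟨by omega, by omega, ?_⟩
      convert hmem using 1
      omega
  · rw [hmx]; omega

lemma A_inv : fr (fr S) = S := by
  have h0 : 0 < mn S := Nat.pos_of_ne_zero (fun h => hpos (h ▸ mn_mem hne))
  have hd : fr S = _ := A_def hne hpos hA1 hA2 hA3
  have hmx : mx (fr S) = mx S + 1 := A_mx hne hpos hA1 hA2 hA3
  have hst : st (fr S) = mn S := A_st hne hpos hA1 hA2 hA3
  have hmn : mn S < mn (fr S) := A_mn_gt hne hpos hA1 hA2 hA3
  rw [fr, if_neg (by omega)]
  rw [hst, hmx, hd]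
  rw [Finset.erase_insert (A_top_not_mem hne hpos hA1 hA2 hA3)]
  rw [show mx S + 1 - mn S = mx S - mn S + 1 by omega]
  rw [Finset.insert_erase (A_mem_aux hne hpos hA1 hA2 hA3)]
  rw [Finset.insert_erase (mn_mem hne)]

end caseA

end Franklin

namespace Franklin

variable {S : Finset ℕ}

section caseB

variable (hne : S.Nonempty) (hpos : 0 ∉ S)
  (hB1 : st S < mn S) (hB2 : 2 * st S < mx S)
include hne hpos hB1 hB2

lemma B_def : fr S = insert (st S) (insert (mx S - st S) (S.erase (mx S))) :=
  if_neg (by omega)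

lemma B_st_not_mem : st S ∉ insert (mx S - st S) (S.erase (mx S)) := by
  intro h
  rcases Finset.mem_insert.1 h with h | h
  · omega
  · have := mn_le hne (Finset.mem_of_mem_erase h)
    omega

lemma B_sub_not_mem : mx S - st S ∉ S.erase (mx S) :=
  fun h => sub_st_not_mem hne hpos (Finset.mem_of_mem_erase h)

lemma B_sum : ∑ x ∈ fr S, x = ∑ x ∈ S, x := by
  rw [B_def hne hpos hB1 hB2]
  rw [Finset.sum_insert (B_st_not_mem hne hpos hB1 hB2),
    Finset.sum_insert (B_sub_not_mem hne hpos hB1 hB2)]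
  have e2 := Finset.add_sum_erase _ id (mx_mem hne)
  simp only [id] at e2
  have := st_le_mx hne hpos
  omega

lemma B_card : (fr S).card = S.card + 1 := by
  rw [B_def hne hpos hB1 hB2]
  rw [Finset.card_insert_of_notMem (B_st_not_mem hne hpos hB1 hB2),
    Finset.card_insert_of_notMem (B_sub_not_mem hne hpos hB1 hB2),
    Finset.card_erase_of_mem (mx_mem hne)]
  have : 0 < S.card := Finset.card_pos.2 hne
  omega

lemma B_pos : 0 ∉ fr S := by
  rw [B_def hne hpos hB1 hB2]
  have h0 := st_pos hne hpos
  intro h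
  rcases Finset.mem_insert.1 h with h | h
  · omega
  · rcases Finset.mem_insert.1 h with h | h
    · omega
    · exact hpos (Finset.mem_of_mem_erase h)

lemma B_mx : mx (fr S) = mx S - 1 := by
  have h0 := st_pos hne hpos
  rw [B_def hne hpos hB1 hB2]
  apply mx_eq
  · -- mx S - 1 is a member
    rcases Nat.lt_or_ge 1 (st S) with h | h
    · -- st S ≥ 2 : mx S - 1 ∈ S
      apply Finset.mem_insert_of_mem
      apply Finset.mem_insert_of_mem
      rw [Finset.mem_erase]
      exact ⟨by omega, mem_of_lt_st h⟩
    · -- st S = 1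
      have : mx S - st S = mx S - 1 := by omega
      rw [← this]
      exact Finset.mem_insert_of_mem (Finset.mem_insert_self _ _)
  · intro x hx
    rcases Finset.mem_insert.1 hx with h | h
    · omega
    · rcases Finset.mem_insert.1 h with h | h
      · omega
      · rw [Finset.mem_erase] at h
        have := le_mx hne h.2
        omega

lemma B_mn : mn (fr S) = st S := by
  rw [B_def hne hpos hB1 hB2]
  apply mn_eq (Finset.mem_insert_self _ _)
  intro x hx
  rcases Finset.mem_insert.1 hx with h | h
  · omega
  · rcases Finset.mem_insert.1 h with h | h
    · omega
    · have := mn_le hne (Finset.mem_of_mem_erase h)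
      omega

lemma B_st_ge : st S ≤ st (fr S) := by
  have h0 := st_pos hne hpos
  have hmx : mx (fr S) = mx S - 1 := B_mx hne hpos hB1 hB2
  apply st_ge
  · intro i hi
    rw [hmx, B_def hne hpos hB1 hB2]
    rcases Nat.lt_or_ge (i + 1) (st S) with h | h
    · apply Finset.mem_insert_of_mem
      apply Finset.mem_insert_of_mem
      rw [Finset.mem_erase]
      have hm : mx S - (i + 1) ∈ S := mem_of_lt_st h
      refine ⟨by omega, ?_⟩
      convert hm using 1
      omega
    · -- i = st S - 1 : element is mx S - st S
      have : mx S - 1 - i = mx S - st S := by omega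
      rw [this]
      exact Finset.mem_insert_of_mem (Finset.mem_insert_self _ _)
  · rw [hmx]; omega

lemma B_inv : fr (fr S) = S := by
  have h0 := st_pos hne hpos
  have hmx : mx (fr S) = mx S - 1 := B_mx hne hpos hB1 hB2
  have hmn : mn (fr S) = st S := B_mn hne hpos hB1 hB2
  have hst : st S ≤ st (fr S) := B_st_ge hne hpos hB1 hB2
  rw [fr, if_pos (by omega), hmn, hmx]
  rw [show mx S - 1 - st S + 1 = mx S - st S by omega]
  rw [B_def hne hpos hB1 hB2]
  rw [Finset.erase_insert (B_st_not_mem hne hpos hB1 hB2)]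
  rw [Finset.erase_insert (B_sub_not_mem hne hpos hB1 hB2)]
  rw [show mx S - 1 + 1 = mx S by omega]
  rw [Finset.insert_erase (mx_mem hne)]

end caseB

end Franklin

namespace Franklin

lemma sum_Ioc_id (a b : ℕ) (h : a ≤ b) :
    (∑ x ∈ Finset.Ioc a b, x) * 2 + a * (a + 1) = b * (b + 1) := by
  induction b with
  | zero => interval_cases a; simp
  | succ n ih =>
    rcases Nat.eq_or_lt_of_le h with rfl | hlt
    · simp
    · have hn : a ≤ n := by omega
      rw [Finset.sum_Ioc_succ_top hn]
      have := ih hn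
      zify at this ⊢
      linear_combination this

variable {S : Finset ℕ}

lemma exc_A (hne : S.Nonempty) (hpos : 0 ∉ S) (h1 : mn S ≤ st S) (h2 : S.card ≤ mn S) :
    2 * (∑ x ∈ S, x) + mn S = 3 * mn S * mn S := by
  have h0 : 0 < mn S := Nat.pos_of_ne_zero (fun h => hpos (h ▸ mn_mem hne))
  have hsc := st_le_card hne hpos
  have hcard : S.card = st S := by omega
  have hEq := eq_Ioc_of_card hne hpos hcard
  have hstmx := st_le_mx hne hpos
  have hstpos := st_pos hne hpos
  -- mn S = mx S - st S + 1
  have hmem : mx S - (st S - 1) ∈ S := mem_of_lt_st (by omega)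
  have hmn2 : mn S ≤ mx S - st S + 1 := by
    have := mn_le hne hmem
    omega
  have hmn1 : mx S - st S < mn S := by
    have hmm : mn S ∈ Finset.Ioc (mx S - st S) (mx S) := by
      rw [← hEq]; exact mn_mem hne
    rw [Finset.mem_Ioc] at hmm
    omega
  have hmn : mn S = mx S - st S + 1 := by omega
  have hst : st S = mn S := by omega
  have hmx : mx S + 1 = 2 * mn S := by omega
  have hkey := sum_Ioc_id (mx S - st S) (mx S) (Nat.sub_le _ _)
  rw [← hEq] at hkey
  have ha : mx S - st S = mn S - 1 := by omega
  rw [ha] at hkey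
  zify [h0] at hkey hmx ⊢
  linear_combination hkey + ((mx S : ℤ) + 2 * (mn S : ℤ)) * hmx

lemma exc_B (hne : S.Nonempty) (hpos : 0 ∉ S) (h1 : st S < mn S) (h2 : S.card = st S)
    (h3 : mx S = 2 * st S) :
    2 * (∑ x ∈ S, x) = 3 * st S * st S + st S := by
  have hEq := eq_Ioc_of_card hne hpos h2
  have hstmx := st_le_mx hne hpos
  have hkey := sum_Ioc_id (mx S - st S) (mx S) (Nat.sub_le _ _)
  rw [← hEq] at hkey
  have ha : mx S - st S = st S := by omega
  rw [ha, h3] at hkey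
  zify at hkey ⊢
  linear_combination hkey

/-- Master lemma: under the non-pentagonality hypothesis, `fr` is a sum-preserving,
parity-flipping involution on positive finsets with sum `k`. -/
lemma master (k : ℕ) (hk : 0 < k)
    (hnp : ∀ j : ℕ, 2 * k + j ≠ 3 * j * j ∧ 2 * k ≠ 3 * j * j + j)
    (hsum : (∑ x ∈ S, x) = k) (hpos : 0 ∉ S) :
    (∑ x ∈ fr S, x) = k ∧ 0 ∉ fr S ∧ fr (fr S) = S ∧
      ((fr S).card + 1 = S.card ∨ (fr S).card = S.card + 1) := by
  have hne : S.Nonempty := by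
    rcases S.eq_empty_or_nonempty with rfl | h
    · simp at hsum; omega
    · exact h
  have h0 : 0 < mn S := Nat.pos_of_ne_zero (fun h => hpos (h ▸ mn_mem hne))
  have hmnmx : mn S ≤ mx S := mn_le hne (mx_mem hne)
  by_cases hA : mn S ≤ st S
  · -- case A
    have hA2 : mn S < S.card := by
      by_contra h
      push_neg at h
      have := exc_A hne hpos hA h
      rw [hsum] at this
      exact (hnp (mn S)).1 this
    have hA3 : 2 * mn S ≤ mx S := by
      have hsub : S ⊆ Finset.Icc (mn S) (mx S) :=
        fun x hx => Finset.mem_Icc.2 ⟨mn_le hne hx, le_mx hne hx⟩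
      have := Finset.card_le_card hsub
      rw [Nat.card_Icc] at this
      omega
    exact ⟨by rw [A_sum hne hpos hA hA2 hA3, hsum], A_pos hne hpos hA hA2 hA3,
      A_inv hne hpos hA hA2 hA3, Or.inl (by have := A_card hne hpos hA hA2 hA3; omega)⟩
  · -- case B
    push_neg at hA
    have hstmx := st_le_mx hne hpos
    have hstc := st_le_card hne hpos
    have hB2 : 2 * st S < mx S := by
      have hstpos := st_pos hne hpos
      have hmem : mx S - (st S - 1) ∈ S := mem_of_lt_st (by omega)
      have hup : mn S ≤ mx S - st S + 1 := by
        have := mn_le hne hmem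
        omega
      rcases Nat.eq_or_lt_of_le hstc with heq | hlt
      · -- S is exactly the staircase
        rcases Nat.lt_or_ge (2 * st S) (mx S) with h | h
        · exact h
        · exfalso
          have hmx : mx S = 2 * st S := by omega
          have := exc_B hne hpos hA heq.symm hmx
          rw [hsum] at this
          exact (hnp (st S)).2 this
      · -- there is an element below the staircase
        have hssub : Finset.Ioc (mx S - st S) (mx S) ⊂ S := by
          rw [Finset.ssubset_iff_subset_ne]
          refine ⟨Ioc_subset hne hpos, fun h => ?_⟩
          have : (Finset.Ioc (mx S - st S) (mx S)).card = S.card := by rw [h]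
          rw [Nat.card_Ioc, Nat.sub_sub_self hstmx] at this
          omega
        obtain ⟨x, hxS, hxI⟩ := Finset.exists_of_ssubset hssub
        rw [Finset.mem_Ioc] at hxI
        push_neg at hxI
        have hx1 : x ≤ mx S := le_mx hne hxS
        have hx2 : ¬ (mx S - st S < x) := fun h => absurd hx1 (Nat.not_le.2 (hxI h))
        have hx3 : x ≠ mx S - st S := fun h => sub_st_not_mem hne hpos (h ▸ hxS)
        have hx4 : mn S ≤ x := mn_le hne hxS
        omega
    exact ⟨by rw [B_sum hne hpos hA hB2, hsum], B_pos hne hpos hA hB2,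
      B_inv hne hpos hA hB2, Or.inr (B_card hne hpos hA hB2)⟩

end Franklin

namespace Franklin

open Finset

lemma franklin_sum (k : ℕ) (hk : 0 < k)
    (hnp : ∀ j : ℕ, 2 * k + j ≠ 3 * j * j ∧ 2 * k ≠ 3 * j * j + j) :
    ∑ S ∈ (Finset.range (k+1)).powerset.filter
      (fun S => (∑ x ∈ S, x) = k ∧ 0 ∉ S), (-1 : ℤ) ^ S.card = 0 := by
  apply Finset.sum_involution (g := fun S _ => fr S)
  case hg₁ =>
    intro S ha
    rw [Finset.mem_filter] at ha
    obtain ⟨-, hsum, hpos⟩ := ha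
    obtain ⟨-, -, -, hcard⟩ := master k hk hnp hsum hpos
    rcases hcard with h | h
    · rw [show S.card = (fr S).card + 1 by omega, pow_succ]; ring
    · rw [h, pow_succ]; ring
  case hg₃ =>
    intro S ha _
    rw [Finset.mem_filter] at ha
    obtain ⟨-, hsum, hpos⟩ := ha
    obtain ⟨-, -, -, hcard⟩ := master k hk hnp hsum hpos
    intro heq
    rw [heq] at hcard
    omega
  case g_mem =>
    intro S ha
    rw [Finset.mem_filter] at ha ⊢
    obtain ⟨-, hsum, hpos⟩ := ha
    obtain ⟨hsum', hpos', -, -⟩ := master k hk hnp hsum hpos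
    refine ⟨Finset.mem_powerset.2 fun x hx => ?_, hsum', hpos'⟩
    rw [Finset.mem_range]
    have : x ≤ ∑ y ∈ fr S, y := Finset.single_le_sum (fun i _ => Nat.zero_le i) hx
    omega
  case hg₄ =>
    intro S ha
    rw [Finset.mem_filter] at ha
    obtain ⟨-, hsum, hpos⟩ := ha
    exact (master k hk hnp hsum hpos).2.2.1

lemma coeff_prod (N k : ℕ) :
    (PowerSeries.coeff (R := ℤ) k) (∏ i ∈ Finset.range N, (1 - (PowerSeries.X : PowerSeries ℤ) ^ (i+1)))
      = ∑ t ∈ (Finset.range N).powerset.filter (fun t => (∑ i ∈ t, (i+1)) = k),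
          (-1 : ℤ) ^ t.card := by
  have h1 : ∀ i ∈ Finset.range N, (1 - (PowerSeries.X : PowerSeries ℤ) ^ (i+1))
      = -(PowerSeries.X : PowerSeries ℤ) ^ (i+1) + 1 := by intros; ring
  rw [Finset.prod_congr rfl h1, Finset.prod_add]
  simp only [Finset.prod_const_one, mul_one]
  have h2 : ∀ t ∈ (Finset.range N).powerset,
      (∏ i ∈ t, -(PowerSeries.X : PowerSeries ℤ) ^ (i+1))
        = PowerSeries.C (R := ℤ) ((-1)^t.card) * PowerSeries.X ^ (∑ i ∈ t, (i+1)) := by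
    intro t _
    have h3 : (∏ i ∈ t, -(PowerSeries.X : PowerSeries ℤ) ^ (i+1))
        = ∏ i ∈ t, (-1) * PowerSeries.X ^ (i+1) :=
      Finset.prod_congr rfl (fun i _ => by ring)
    rw [h3, Finset.prod_mul_distrib, Finset.prod_const, Finset.prod_pow_eq_pow_sum]
    congr 1
    simp
  rw [Finset.sum_congr rfl h2, map_sum]
  simp only [PowerSeries.coeff_C_mul, PowerSeries.coeff_X_pow]
  rw [Finset.sum_filter]
  apply Finset.sum_congr rfl
  intro t _
  by_cases h : (∑ i ∈ t, (i+1)) = k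
  · simp [h]
  · simp [h, Ne.symm h]

lemma coeff_shift (k : ℕ) (hk : 0 < k)
    (hnp : ∀ j : ℕ, 2 * k + j ≠ 3 * j * j ∧ 2 * k ≠ 3 * j * j + j) :
    ∑ t ∈ (Finset.range (k+1)).powerset.filter (fun t => (∑ i ∈ t, (i+1)) = k),
      (-1 : ℤ) ^ t.card = 0 := by
  rw [← franklin_sum k hk hnp]
  apply Finset.sum_nbij' (i := fun t => t.image (· + 1)) (j := fun S => S.image (· - 1))
  · -- hi
    intro t ht
    rw [Finset.mem_filter] at ht ⊢
    obtain ⟨-, hsum⟩ := ht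
    have hsum' : ∑ x ∈ t.image (· + 1), x = k := by
      rw [Finset.sum_image (fun x _ y _ h => by omega)]
      exact hsum
    refine ⟨Finset.mem_powerset.2 fun x hx => ?_, hsum', fun h0 => ?_⟩
    · rw [Finset.mem_range]
      have : x ≤ ∑ y ∈ t.image (· + 1), y := Finset.single_le_sum (fun i _ => Nat.zero_le i) hx
      omega
    · obtain ⟨y, -, hy⟩ := Finset.mem_image.1 h0
      omega
  · -- hj
    intro S hS
    rw [Finset.mem_filter] at hS ⊢
    obtain ⟨hsub, hsum, hpos⟩ := hS
    have hone : ∀ x ∈ S, 1 ≤ x := fun x hx => Nat.pos_of_ne_zero (fun h => hpos (h ▸ hx))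
    have hinj : ∀ x ∈ S, ∀ y ∈ S, x - 1 = y - 1 → x = y := by
      intro x hx y hy h
      have := hone x hx; have := hone y hy; omega
    have hsum' : ∑ i ∈ S.image (· - 1), (i + 1) = k := by
      rw [Finset.sum_image hinj, ← hsum]
      apply Finset.sum_congr rfl
      intro x hx; have := hone x hx; omega
    refine ⟨Finset.mem_powerset.2 fun x hx => ?_, hsum'⟩
    rw [Finset.mem_range]
    obtain ⟨y, hy, hyx⟩ := Finset.mem_image.1 hx
    have := Finset.mem_range.1 (Finset.mem_powerset.1 hsub hy)
    omega
  · -- left_inv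
    intro t _
    rw [Finset.image_image]
    have : ∀ x ∈ t, ((· - 1) ∘ (· + 1)) x = id x := fun x _ => by simp
    rw [Finset.image_congr this, Finset.image_id]
  · -- right_inv
    intro S hS
    rw [Finset.mem_filter] at hS
    obtain ⟨-, -, hpos⟩ := hS
    rw [Finset.image_image]
    have : ∀ x ∈ S, ((· + 1) ∘ (· - 1)) x = id x := by
      intro x hx
      have : x ≠ 0 := fun h => hpos (h ▸ hx)
      simp only [Function.comp_apply, id]
      omega
    rw [Finset.image_congr this, Finset.image_id]
  · -- h
    intro t _
    rw [Finset.card_image_of_injective _ (fun x y h => by omega)]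

end Franklin

/-- the coefficient of the eta-like product vanishes at indices ≡ r mod p
when 24r+1 is a quadratic nonresidue. -/
lemma coeff_poch_zero (p : ℕ) (hp : p.Prime) (r : ℕ) (hr0 : 0 < r) (hrp : r < p)
    (hqnr : ¬ IsSquare ((24 * r + 1 : ℕ) : ZMod p))
    (k : ℕ) (hk : (k : ZMod p) = (r : ZMod p)) :
    PowerSeries.coeff (R := ℤ) k (pochSelf 1) = 0 := by
  haveI : Fact p.Prime := ⟨hp⟩
  haveI : NeZero p := ⟨hp.ne_zero⟩
  have hrne : (r : ZMod p) ≠ 0 := by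
    intro h
    rw [ZMod.natCast_eq_zero_iff] at h
    have := Nat.le_of_dvd hr0 h
    omega
  have hk0 : 0 < k := by
    rcases Nat.eq_zero_or_pos k with rfl | h
    · exact absurd (by simpa using hk.symm) hrne
    · exact h
  have hcast : ((24 * r + 1 : ℕ) : ZMod p) = 24 * (k : ZMod p) + 1 := by
    push_cast
    rw [hk]
  have hnp : ∀ j : ℕ, 2 * k + j ≠ 3 * j * j ∧ 2 * k ≠ 3 * j * j + j := by
    intro j
    constructor
    · intro h
      apply hqnr
      have he : 2 * (k : ZMod p) + (j : ZMod p) = 3 * (j : ZMod p) * (j : ZMod p) := by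
        exact_mod_cast congrArg (fun m : ℕ => (m : ZMod p)) h
      exact ⟨6 * (j : ZMod p) - 1, by rw [hcast]; linear_combination 12 * he⟩
    · intro h
      apply hqnr
      have he : 2 * (k : ZMod p) = 3 * (j : ZMod p) * (j : ZMod p) + (j : ZMod p) := by
        exact_mod_cast congrArg (fun m : ℕ => (m : ZMod p)) h
      exact ⟨6 * (j : ZMod p) + 1, by rw [hcast]; linear_combination 12 * he⟩
  rw [pochSelf, PowerSeries.coeff_mk]
  simp only [one_mul]
  rw [Franklin.coeff_prod (k + 1) k]
  exact Franklin.coeff_shift k hk0 hnp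


end FranklinAux

/-- If `f` is a power series in `q^p` (i.e. all coefficients at exponents not
divisible by `p` vanish), and `24r+1` is a quadratic nonresidue mod the prime
`p ≥ 5` with `0 < r < p`, then the coefficient of `q^{pn+r}` in
`(q;q)_∞ · f` vanishes identically over ℤ. -/
theorem coeff_eta_mul_series_in_qp (p : ℕ) (hp : p.Prime) (hp5 : 5 ≤ p)
    (r : ℕ) (hr0 : 0 < r) (hrp : r < p)
    (hqnr : ¬ IsSquare ((24 * r + 1 : ℕ) : ZMod p))
    (f : PowerSeries ℤ) (hf : ∀ m : ℕ, ¬ p ∣ m → PowerSeries.coeff (R := ℤ) m f = 0)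
    (n : ℕ) :
    PowerSeries.coeff (R := ℤ) (p * n + r) (pochSelf 1 * f) = 0 := by
  rw [PowerSeries.coeff_mul]
  apply Finset.sum_eq_zero
  rintro ⟨a, b⟩ hab
  replace hab : a + b = p * n + r := Finset.HasAntidiagonal.mem_antidiagonal.mp hab
  by_cases hpb : p ∣ b
  · obtain ⟨c, rfl⟩ := hpb
    have h2 : (a : ZMod p) = (r : ZMod p) := by
      have h := congrArg (fun m : ℕ => (m : ZMod p)) hab
      push_cast at h
      rw [ZMod.natCast_self] at h
      simpa using h
    rw [coeff_poch_zero p hp r hr0 hrp hqnr a h2, zero_mul]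
  · rw [hf b hpb, mul_zero]
end
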